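/- If f : Mₙ(ℂ)^d → ℂ is a polynomial function invariant under simultaneous conjugation by all unitary matrices, then f is invariant under simultaneous conjugation by all invertible matrices (a version of Weyl's unitarian trick). -/

import Mathlib

open Matrix NormedSpace

lemma aux_diff_eval {σ : Type*} [Fintype σ] (P : MvPolynomial σ ℂ) :
    Differentiable ℂ (fun x : σ → ℂ => MvPolynomial.eval x P) := by
  induction P using MvPolynomial.induction_on with
  | C a => simp
  | add p q hp hq => simp only [MvPolynomial.eval_add]; exact hp.add hq
  | mul_X p i hp =>
      simp only [MvPolynomial.eval_mul, MvPolynomial.eval_X]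
      exact hp.mul (differentiable_pi.mp differentiable_id i)

lemma aux_key (n d : ℕ) (f : (Fin d → Matrix (Fin n) (Fin n) ℂ) → ℂ)
    (hpoly : ∃ P : MvPolynomial (Fin d × Fin n × Fin n) ℂ,
      ∀ Z : Fin d → Matrix (Fin n) (Fin n) ℂ,
        f Z = MvPolynomial.eval (fun p => Z p.1 p.2.1 p.2.2) P)
    (hunit : ∀ (u : Matrix.unitaryGroup (Fin n) ℂ) (Z : Fin d → Matrix (Fin n) (Fin n) ℂ),
      f (fun i => (↑u⁻¹ : Matrix (Fin n) (Fin n) ℂ) * Z i * (↑u : Matrix (Fin n) (Fin n) ℂ)) = f Z)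
    (H : Matrix (Fin n) (Fin n) ℂ) (hH : H.IsHermitian)
    (Z : Fin d → Matrix (Fin n) (Fin n) ℂ) :
    f (fun i => exp (-H) * Z i * exp H) = f Z := by
  letI : SeminormedRing (Matrix (Fin n) (Fin n) ℂ) := Matrix.linftyOpSemiNormedRing
  letI : NormedRing (Matrix (Fin n) (Fin n) ℂ) := Matrix.linftyOpNormedRing
  letI : NormedAlgebra ℂ (Matrix (Fin n) (Fin n) ℂ) := Matrix.linftyOpNormedAlgebra
  obtain ⟨P, hP⟩ := hpoly
  set g : ℂ → ℂ := fun z => f (fun i => exp (z • (-H)) * Z i * exp (z • H)) with hg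
  have hexp : ∀ M : Matrix (Fin n) (Fin n) ℂ, Differentiable ℂ (fun z : ℂ => exp (z • M)) :=
    fun M z => (hasDerivAt_exp_smul_const M z).differentiableAt
  have hmat : ∀ i, Differentiable ℂ (fun z : ℂ => exp (z • (-H)) * Z i * exp (z • H)) :=
    fun i => ((hexp (-H)).mul (differentiable_const (Z i))).mul (hexp H)
  have hdg : Differentiable ℂ g := by
    have hgeq : g = fun z => MvPolynomial.eval
        (fun p : Fin d × Fin n × Fin n =>
          (exp (z • (-H)) * Z p.1 * exp (z • H)) p.2.1 p.2.2) P := by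
      funext z; exact hP _
    rw [hgeq]
    have hproj : ∀ (a b : Fin n),
        Differentiable ℂ (fun M : Matrix (Fin n) (Fin n) ℂ => M a b) := by
      intro a b
      exact (LinearMap.toContinuousLinearMap
        ({ toFun := fun M : Matrix (Fin n) (Fin n) ℂ => M a b,
           map_add' := fun _ _ => rfl,
           map_smul' := fun _ _ => rfl } : Matrix (Fin n) (Fin n) ℂ →ₗ[ℂ] ℂ)).differentiable
    refine (aux_diff_eval P).comp (differentiable_pi.mpr fun p => ?_)
    exact (hproj p.2.1 p.2.2).comp (hmat p.1)
  -- g is constant on the imaginary axis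
  have himag : ∀ t : ℝ, g (Complex.I * t) = f Z := by
    intro t
    set w : ℂ := Complex.I * t with hw
    have hstar : star (exp (w • H)) = exp (w • (-H)) := by
      have h1 : (exp (w • H))ᴴ = exp ((w • H)ᴴ) := (Matrix.exp_conjTranspose _).symm
      rw [Matrix.star_eq_conjTranspose, h1]
      congr 1
      rw [Matrix.conjTranspose_smul, hH.eq]
      rw [smul_neg, ← neg_smul]
      congr 1
      simp [hw, Complex.ext_iff]
    have hmem : exp (w • H) ∈ Matrix.unitaryGroup (Fin n) ℂ := by
      rw [Matrix.mem_unitaryGroup_iff']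
      rw [hstar]
      have : w • (-H) = -(w • H) := by rw [smul_neg]
      rw [this, Matrix.exp_neg]
      exact Matrix.nonsing_inv_mul _ ((Matrix.isUnit_iff_isUnit_det _).mp (Matrix.isUnit_exp _))
    have hu := hunit ⟨exp (w • H), hmem⟩ Z
    have hcoe : (↑((⟨exp (w • H), hmem⟩ : Matrix.unitaryGroup (Fin n) ℂ)⁻¹) :
        Matrix (Fin n) (Fin n) ℂ) = exp (w • (-H)) := by
      rw [← Unitary.star_eq_inv, Unitary.coe_star]
      exact hstar
    rw [hcoe] at hu
    exact hu
  -- conclude by the identity theorem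
  have hfreq : ∃ᶠ z in nhdsWithin (0 : ℂ) {(0:ℂ)}ᶜ, g z = (fun _ => f Z) z := by
    have htend : Filter.Tendsto (fun k : ℕ => Complex.I * (((k : ℝ) + 1)⁻¹ : ℝ))
        Filter.atTop (nhdsWithin (0 : ℂ) {(0:ℂ)}ᶜ) := by
      apply tendsto_nhdsWithin_of_tendsto_nhds_of_eventually_within
      · have h0 : Filter.Tendsto (fun k : ℕ => (((k : ℝ) + 1)⁻¹ : ℝ)) Filter.atTop (nhds 0) := by
          simpa [one_div] using tendsto_one_div_add_atTop_nhds_zero_nat (𝕜 := ℝ)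
        have := (Complex.continuous_ofReal.tendsto 0).comp h0
        have h2 := (continuous_const (y := Complex.I)).mul Complex.continuous_ofReal
        simpa using (tendsto_const_nhds (α := ℕ) (f := Filter.atTop) (x := Complex.I)).mul this
      · filter_upwards with k
        simp only [Set.mem_compl_iff, Set.mem_singleton_iff]
        intro h
        rw [mul_eq_zero] at h
        rcases h with h | h
        · exact Complex.I_ne_zero h
        · rw [Complex.ofReal_eq_zero] at h
          exact (by positivity : (0:ℝ) < (k : ℝ) + 1).ne' (inv_eq_zero.mp h)
    exact htend.frequently (Filter.Frequently.of_forall fun k => himag _)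
  have hconst : g = fun _ => f Z := by
    refine AnalyticOnNhd.eq_of_frequently_eq ?_ analyticOnNhd_const hfreq
    exact Complex.analyticOnNhd_univ_iff_differentiable.mpr hdg
  have h1 := congrFun hconst 1
  simpa [hg, one_smul] using h1

theorem stmt_10 (n d : ℕ) (f : (Fin d → Matrix (Fin n) (Fin n) ℂ) → ℂ)
    (hpoly : ∃ P : MvPolynomial (Fin d × Fin n × Fin n) ℂ,
      ∀ Z : Fin d → Matrix (Fin n) (Fin n) ℂ,
        f Z = MvPolynomial.eval (fun p => Z p.1 p.2.1 p.2.2) P)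
    (hunit : ∀ (u : Matrix.unitaryGroup (Fin n) ℂ) (Z : Fin d → Matrix (Fin n) (Fin n) ℂ),
      f (fun i => (↑u⁻¹ : Matrix (Fin n) (Fin n) ℂ) * Z i * (↑u : Matrix (Fin n) (Fin n) ℂ)) = f Z) :
    ∀ (s : GL (Fin n) ℂ) (Z : Fin d → Matrix (Fin n) (Fin n) ℂ),
      f (fun i => (↑s⁻¹ : Matrix (Fin n) (Fin n) ℂ) * Z i * (↑s : Matrix (Fin n) (Fin n) ℂ)) = f Z := by
  intro s Z
  classical
  set S : Matrix (Fin n) (Fin n) ℂ := ↑s with hSdef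
  have hSunit : IsUnit S := ⟨s, rfl⟩
  have hAunit : IsUnit (S * Sᴴ) := hSunit.mul hSunit.star
  have hA : (S * Sᴴ).IsHermitian := Matrix.isHermitian_mul_conjTranspose_self S
  set lam : Fin n → ℝ := hA.eigenvalues with hlam
  set V : Matrix (Fin n) (Fin n) ℂ := ↑(hA.eigenvectorUnitary) with hV
  have hVmem : V ∈ Matrix.unitaryGroup (Fin n) ℂ := hA.eigenvectorUnitary.2
  have hVsV : star V * V = 1 := Matrix.mem_unitaryGroup_iff'.mp hVmem
  have hVVs : V * star V = 1 := Matrix.mem_unitaryGroup_iff.mp hVmem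
  have hVinv : V⁻¹ = star V := Matrix.inv_eq_left_inv hVsV
  -- positivity of eigenvalues
  have hlampos : ∀ i, 0 < lam i := by
    intro i
    rcases lt_or_eq_of_le (Matrix.eigenvalues_self_mul_conjTranspose_nonneg S i)
      with h | h
    · exact h
    · exfalso
      have hdet := hA.det_eq_prod_eigenvalues
      have : (S * Sᴴ).det = 0 := by
        rw [hdet]
        refine Finset.prod_eq_zero (Finset.mem_univ i) ?_
        have h' : hA.eigenvalues i = 0 := h.symm
        rw [h']
        norm_num
      exact ((Matrix.isUnit_iff_isUnit_det _).mp hAunit).ne_zero this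
  set mu : Fin n → ℝ := fun i => Real.sqrt (lam i) with hmu
  have hmupos : ∀ i, 0 < mu i := fun i => Real.sqrt_pos.mpr (hlampos i)
  set D : Matrix (Fin n) (Fin n) ℂ := Matrix.diagonal (fun i => (Real.log (mu i) : ℂ)) with hD
  set H : Matrix (Fin n) (Fin n) ℂ := V * D * star V with hHdef
  have hDh : Dᴴ = D := by
    simp [hD, Matrix.diagonal_conjTranspose, Function.comp_def, Complex.conj_ofReal]
  have hH : H.IsHermitian := by
    show Hᴴ = H
    rw [hHdef, Matrix.star_eq_conjTranspose, Matrix.conjTranspose_mul, Matrix.conjTranspose_mul,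
      Matrix.conjTranspose_conjTranspose, hDh, ← mul_assoc]
  set P : Matrix (Fin n) (Fin n) ℂ := exp H with hP
  have hVunit : IsUnit V := (Matrix.isUnit_iff_isUnit_det _).mpr (Matrix.isUnit_det_of_right_inverse hVVs)
  have hPeq : P = V * Matrix.diagonal (fun i => (mu i : ℂ)) * star V := by
    have hdiagexp : Matrix.diagonal (fun i => Complex.exp ((Real.log (mu i) : ℝ) : ℂ)) =
        Matrix.diagonal (fun i => (mu i : ℂ)) := by
      exact congrArg Matrix.diagonal (funext fun i => by
        rw [← Complex.ofReal_exp, Real.exp_log (hmupos i)])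
    rw [hP, hHdef, ← hVinv, Matrix.exp_conj V D hVunit, Matrix.exp_diagonal, hVinv, Pi.exp_def]
    simp only [← Complex.exp_eq_exp_ℂ]
    rw [hdiagexp]
  have hPher : Pᴴ = P := by rw [hP, ← Matrix.exp_conjTranspose, hH.eq]
  have hPunit : IsUnit P := by rw [hP]; exact Matrix.isUnit_exp H
  have hPdet : IsUnit P.det := (Matrix.isUnit_iff_isUnit_det _).mp hPunit
  have hPP : P * P = S * Sᴴ := by
    have hsq : (fun i => ((mu i : ℝ) : ℂ) * ((mu i : ℝ) : ℂ)) = fun i => ((lam i : ℝ) : ℂ) := by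
      funext i
      rw [← Complex.ofReal_mul, Real.mul_self_sqrt (hlampos i).le]
    have hspec := hA.spectral_theorem
    have hco : (RCLike.ofReal ∘ hA.eigenvalues : Fin n → ℂ) = fun i => ((lam i : ℝ) : ℂ) := rfl
    rw [hco] at hspec
    set D1 : Matrix (Fin n) (Fin n) ℂ := Matrix.diagonal (fun i => ((mu i : ℝ) : ℂ)) with hD1
    calc P * P = V * D1 * star V * (V * D1 * star V) := by rw [hPeq]
      _ = V * D1 * (star V * V) * D1 * star V := by noncomm_ring
      _ = V * (D1 * D1) * star V := by rw [hVsV, mul_one]; noncomm_ring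
      _ = V * Matrix.diagonal (fun i => ((lam i : ℝ) : ℂ)) * star V := by
          rw [hD1, Matrix.diagonal_mul_diagonal, hsq]
      _ = S * Sᴴ := hspec.symm
  set u : Matrix (Fin n) (Fin n) ℂ := P⁻¹ * S with hu
  have hustar : star u = Sᴴ * P⁻¹ := by
    rw [hu, Matrix.star_eq_conjTranspose, Matrix.conjTranspose_mul,
      Matrix.conjTranspose_nonsing_inv, hPher]
  have huu : u * star u = 1 := by
    rw [hu, hustar]
    have h1 : P⁻¹ * S * (Sᴴ * P⁻¹) = P⁻¹ * (S * Sᴴ) * P⁻¹ := by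
      simp only [mul_assoc]
    rw [h1, ← hPP, ← mul_assoc,
      Matrix.nonsing_inv_mul _ hPdet, one_mul, Matrix.mul_nonsing_inv _ hPdet]
  have humem : u ∈ Matrix.unitaryGroup (Fin n) ℂ := Matrix.mem_unitaryGroup_iff.mpr huu
  have huinv : u⁻¹ = star u := Matrix.inv_eq_right_inv huu
  have hSPu : S = P * u := by
    rw [hu, ← mul_assoc, Matrix.mul_nonsing_inv _ hPdet, one_mul]
  have hSinv : S⁻¹ = star u * P⁻¹ := by
    rw [hSPu, Matrix.mul_inv_rev, huinv]
  have step1 : (fun i => (↑s⁻¹ : Matrix (Fin n) (Fin n) ℂ) * Z i * (↑s : Matrix (Fin n) (Fin n) ℂ))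
      = fun i => star u * (P⁻¹ * Z i * P) * u := by
    funext i
    rw [Matrix.GeneralLinearGroup.coe_inv, ← hSdef, hSinv]
    conv_lhs => rw [hSPu]
    simp only [mul_assoc]
  rw [step1]
  have h2 := hunit ⟨u, humem⟩ (fun i => P⁻¹ * Z i * P)
  have hcoeu : (↑((⟨u, humem⟩ : Matrix.unitaryGroup (Fin n) ℂ)⁻¹) :
      Matrix (Fin n) (Fin n) ℂ) = star u := by
    rw [← Unitary.star_eq_inv, Unitary.coe_star]
  rw [hcoeu] at h2
  rw [h2]
  have hPinv : P⁻¹ = exp (-H) := by rw [hP, ← Matrix.exp_neg]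
  have hPe : (fun i => P⁻¹ * Z i * P) = fun i => exp (-H) * Z i * exp H := by
    funext i; rw [hPinv, hP]
  rw [hPe]
  exact aux_key n d f hpoly hunit H hH Z
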